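/- arXiv:2508.20803 — 2 statements merged into one kernel-verified Lean document; each statement's English description precedes it below -/
import Mathlib

section
/- Let 0 < h_1 ≤ h_2 ≤ … ≤ h_n and let r, k be integers with 1 ≤ k < r and k < n, satisfying (r−k+1) h_{n−k+1} ≥ Σ_{i=1}^{n−k+1} h_i and (r−k) h_{n−k} < Σ_{i=1}^{n−k} h_i. Define T = Σ_{i=1}^{n−k} h_i / (r−k). Then h_{n−k} < T ≤ h_{n−k+1}; moreover min(h_j, T) = h_j for j ≤ n−k and min(h_j, T) = T for j > n−k, so that Σ_{j=1}^n min(h_j, T) = r T and max_{1≤i≤n} r·min(h_i,T)/Σ_{j} min(h_j,T) = 1. -/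
open scoped BigOperators

/-- Existence of the truncation threshold: for sorted positive h_1 ≤ … ≤ h_n
(1-based indexing) and integers 1 ≤ k < r, k < n with
(r−k+1) h_{n−k+1} ≥ Σ_{i=1}^{n−k+1} h_i and (r−k) h_{n−k} < Σ_{i=1}^{n−k} h_i,
the threshold T = Σ_{i=1}^{n−k} h_i/(r−k) satisfies h_{n−k} < T ≤ h_{n−k+1},
min(h_j,T) = h_j for j ≤ n−k and = T for j > n−k, Σ_j min(h_j,T) = r T, and
max_i r·min(h_i,T)/Σ_j min(h_j,T) = 1. -/
theorem truncation_threshold (n r k : ℕ) (h : ℕ → ℝ)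
    (hpos : ∀ i, 1 ≤ i → i ≤ n → 0 < h i)
    (hmono : ∀ i j, 1 ≤ i → i ≤ j → j ≤ n → h i ≤ h j)
    (hk1 : 1 ≤ k) (hkr : k < r) (hkn : k < n)
    (hup : ((r : ℝ) - k + 1) * h (n - k + 1) ≥ ∑ i ∈ Finset.Icc 1 (n - k + 1), h i)
    (hlow : ((r : ℝ) - k) * h (n - k) < ∑ i ∈ Finset.Icc 1 (n - k), h i) :
    h (n - k) < (∑ i ∈ Finset.Icc 1 (n - k), h i) / ((r : ℝ) - k) ∧
    (∑ i ∈ Finset.Icc 1 (n - k), h i) / ((r : ℝ) - k) ≤ h (n - k + 1) ∧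
    (∀ j, 1 ≤ j → j ≤ n - k →
      min (h j) ((∑ i ∈ Finset.Icc 1 (n - k), h i) / ((r : ℝ) - k)) = h j) ∧
    (∀ j, n - k < j → j ≤ n →
      min (h j) ((∑ i ∈ Finset.Icc 1 (n - k), h i) / ((r : ℝ) - k)) =
        (∑ i ∈ Finset.Icc 1 (n - k), h i) / ((r : ℝ) - k)) ∧
    (∑ j ∈ Finset.Icc 1 n,
        min (h j) ((∑ i ∈ Finset.Icc 1 (n - k), h i) / ((r : ℝ) - k))) =
      (r : ℝ) * ((∑ i ∈ Finset.Icc 1 (n - k), h i) / ((r : ℝ) - k)) ∧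
    (∀ i ∈ Finset.Icc 1 n,
      (r : ℝ) * min (h i) ((∑ i ∈ Finset.Icc 1 (n - k), h i) / ((r : ℝ) - k)) /
        (∑ j ∈ Finset.Icc 1 n,
          min (h j) ((∑ i ∈ Finset.Icc 1 (n - k), h i) / ((r : ℝ) - k))) ≤ 1) ∧
    (∃ i ∈ Finset.Icc 1 n,
      (r : ℝ) * min (h i) ((∑ i ∈ Finset.Icc 1 (n - k), h i) / ((r : ℝ) - k)) /
        (∑ j ∈ Finset.Icc 1 n,
          min (h j) ((∑ i ∈ Finset.Icc 1 (n - k), h i) / ((r : ℝ) - k))) = 1) := by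
  set m := n - k with hm
  have hm1 : 1 ≤ m := by omega
  have hmn : m + 1 ≤ n := by omega
  have hrk : (0 : ℝ) < (r : ℝ) - k := by
    have : (k : ℝ) < r := by exact_mod_cast hkr
    linarith
  set S := ∑ i ∈ Finset.Icc 1 m, h i with hS
  set T := S / ((r : ℝ) - k) with hT
  have hlt : h m < T := by
    rw [hT, lt_div_iff₀ hrk]; linarith [hlow]
  have hsplit : ∑ i ∈ Finset.Icc 1 (m + 1), h i = S + h (m + 1) := by
    rw [hS, Finset.sum_Icc_succ_top (by omega : 1 ≤ m + 1)]
  have hle : T ≤ h (m + 1) := by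
    rw [hT, div_le_iff₀ hrk]
    have := hup
    rw [hsplit] at this
    nlinarith
  have hminlo : ∀ j, 1 ≤ j → j ≤ m → min (h j) T = h j := by
    intro j h1 h2
    exact min_eq_left (le_of_lt (lt_of_le_of_lt (hmono j m h1 h2 (by omega)) hlt))
  have hminhi : ∀ j, m < j → j ≤ n → min (h j) T = T := by
    intro j h1 h2
    exact min_eq_right (le_trans hle (hmono (m + 1) j (by omega) (by omega) h2))
  have hTpos : 0 < T := lt_trans (hpos m hm1 (by omega)) hlt
  have hrpos : (0 : ℝ) < r := by
    have : (k : ℝ) ≥ 0 := Nat.cast_nonneg k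
    linarith
  have hsum : (∑ j ∈ Finset.Icc 1 n, min (h j) T) = (r : ℝ) * T := by
    have h1 : Finset.Icc 1 n = Finset.Ioc 0 n := by
      rw [← Finset.Icc_add_one_left_eq_Ioc]; rfl
    have h2 : Finset.Icc 1 m = Finset.Ioc 0 m := by
      rw [← Finset.Icc_add_one_left_eq_Ioc]; rfl
    have hcons := Finset.sum_Ioc_consecutive (fun j => min (h j) T)
      (Nat.zero_le m) (by omega : m ≤ n)
    rw [h1, ← hcons]
    have e1 : (∑ j ∈ Finset.Ioc 0 m, min (h j) T) = S := by
      rw [hS, h2]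
      apply Finset.sum_congr rfl
      intro j hj
      rw [Finset.mem_Ioc] at hj
      exact hminlo j (by omega) hj.2
    have e2 : (∑ j ∈ Finset.Ioc m n, min (h j) T) = (k : ℝ) * T := by
      have hc : (∑ j ∈ Finset.Ioc m n, min (h j) T) = ∑ _j ∈ Finset.Ioc m n, T :=
        Finset.sum_congr rfl (fun j hj => by
          rw [Finset.mem_Ioc] at hj
          exact hminhi j hj.1 hj.2)
      rw [hc, Finset.sum_const, Nat.card_Ioc]
      have : n - m = k := by omega
      rw [this, nsmul_eq_mul]
    rw [e1, e2]
    have hST : S = ((r : ℝ) - k) * T := by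
      rw [hT, mul_div_cancel₀ _ (ne_of_gt hrk)]
    rw [hST]; ring
  refine ⟨hlt, hle, hminlo, hminhi, hsum, ?_, ?_⟩
  · intro i hi
    rw [Finset.mem_Icc] at hi
    rw [hsum, div_le_one (by positivity)]
    have : min (h i) T ≤ T := min_le_right _ _
    nlinarith
  · refine ⟨n, Finset.mem_Icc.mpr ⟨by omega, le_refl n⟩, ?_⟩
    rw [hsum, hminhi n (by omega) (le_refl n), div_self (by positivity)]
end

section
/- Let 0 < h_1 ≤ … ≤ h_n and let r, k be integers with 0 ≤ k < r ≤ n and k < n such that (when k ≥ 1) (r−k+1) h_{n−k+1} ≥ Σ_{i=1}^{n−k+1} h_i, and (r−k) h_{n−k} < Σ_{i=1}^{n−k} h_i. Then for every (π_1,…,π_n) with 0 < π_i ≤ 1 and Σ_i π_i = r, one has Σ_{i=1}^n h_i^2/π_i ≥ Σ_{i=n−k+1}^n h_i^2 + (Σ_{i=1}^{n−k} h_i)^2/(r−k). -/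
open scoped BigOperators

/-- Sharp lower bound for the subsampling objective over the feasible set: for sorted
positive h_1 ≤ … ≤ h_n (1-based indexing) and integers 0 ≤ k < r ≤ n, k < n with
(when k ≥ 1) (r−k+1) h_{n−k+1} ≥ Σ_{i=1}^{n−k+1} h_i, and
(r−k) h_{n−k} < Σ_{i=1}^{n−k} h_i, every feasible vector (0 < π_i ≤ 1, Σ π_i = r)
satisfies Σ h_i²/π_i ≥ Σ_{i=n−k+1}^n h_i² + (Σ_{i=1}^{n−k} h_i)²/(r−k). -/
theorem objective_sharp_lower_bound (n r k : ℕ) (h : ℕ → ℝ)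
    (hpos : ∀ i, 1 ≤ i → i ≤ n → 0 < h i)
    (hmono : ∀ i j, 1 ≤ i → i ≤ j → j ≤ n → h i ≤ h j)
    (hkr : k < r) (hrn : r ≤ n) (hkn : k < n)
    (hup : 1 ≤ k →
      ((r : ℝ) - k + 1) * h (n - k + 1) ≥ ∑ i ∈ Finset.Icc 1 (n - k + 1), h i)
    (hlow : ((r : ℝ) - k) * h (n - k) < ∑ i ∈ Finset.Icc 1 (n - k), h i) :
    ∀ π : ℕ → ℝ, (∀ i ∈ Finset.Icc 1 n, 0 < π i ∧ π i ≤ 1) →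
      (∑ i ∈ Finset.Icc 1 n, π i) = (r : ℝ) →
      (∑ i ∈ Finset.Icc (n - k + 1) n, (h i) ^ 2) +
          (∑ i ∈ Finset.Icc 1 (n - k), h i) ^ 2 / ((r : ℝ) - k) ≤
        ∑ i ∈ Finset.Icc 1 n, (h i) ^ 2 / π i := by
  intro π hπ hsum
  set m := n - k with hm
  have hm1 : 1 ≤ m := by omega
  have hmn : m ≤ n := by omega
  have hrk : (0:ℝ) < (r:ℝ) - k := by
    have : (k:ℝ) < r := by exact_mod_cast hkr
    linarith
  set S : ℝ := ∑ i ∈ Finset.Icc 1 m, h i with hS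
  set T : ℝ := S / ((r:ℝ) - k) with hT
  have hSpos : 0 < S := by
    apply Finset.sum_pos
    · intro i hi
      exact hpos i (Finset.mem_Icc.mp hi).1 (le_trans (Finset.mem_Icc.mp hi).2 hmn)
    · exact ⟨1, by simp [Finset.mem_Icc]; omega⟩
  have hTpos : 0 < T := div_pos hSpos hrk
  have hTS : T * ((r:ℝ) - k) = S := by
    rw [hT]; exact div_mul_cancel₀ S hrk.ne'
  -- h i ≥ T on the tail
  have htail : ∀ i, m + 1 ≤ i → i ≤ n → T ≤ h i := by
    intro i hi1 hi2
    have hk1 : 1 ≤ k := by omega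
    have h1 := hup hk1
    have hmk : n - k + 1 = m + 1 := rfl
    rw [hmk] at h1
    have hsplit : ∑ j ∈ Finset.Icc 1 (m+1), h j = S + h (m+1) := by
      rw [hS, Finset.sum_Icc_succ_top (by omega : 1 ≤ m + 1)]
    rw [hsplit] at h1
    have hTm : T ≤ h (m+1) := by
      rw [hT, div_le_iff₀ hrk]
      nlinarith [h1]
    exact le_trans hTm (hmono (m+1) i (by omega) hi1 hi2)
  -- split the index set
  have hun : Finset.Icc 1 n = Finset.Icc 1 m ∪ Finset.Icc (m+1) n := by
    ext x; simp only [Finset.mem_Icc, Finset.mem_union]; omega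
  have hdisj : Disjoint (Finset.Icc 1 m) (Finset.Icc (m+1) n) := by
    simp only [Finset.disjoint_left, Finset.mem_Icc]
    intro a ha; omega
  have hsplitf : ∀ f : ℕ → ℝ, ∑ i ∈ Finset.Icc 1 n, f i
      = ∑ i ∈ Finset.Icc 1 m, f i + ∑ i ∈ Finset.Icc (m+1) n, f i := by
    intro f; rw [hun, Finset.sum_union hdisj]
  -- pointwise bounds
  have hhead : ∀ i ∈ Finset.Icc 1 m, 2 * T * h i - T^2 * π i ≤ (h i)^2 / π i := by
    intro i hi
    obtain ⟨hi1, hi2⟩ := Finset.mem_Icc.mp hi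
    obtain ⟨hp0, hp1⟩ := hπ i (Finset.mem_Icc.mpr ⟨hi1, le_trans hi2 hmn⟩)
    rw [le_div_iff₀ hp0]
    nlinarith [sq_nonneg (h i - T * π i)]
  have htailb : ∀ i ∈ Finset.Icc (m+1) n,
      (h i)^2 + T^2 - T^2 * π i ≤ (h i)^2 / π i := by
    intro i hi
    obtain ⟨hi1, hi2⟩ := Finset.mem_Icc.mp hi
    obtain ⟨hp0, hp1⟩ := hπ i (Finset.mem_Icc.mpr ⟨by omega, hi2⟩)
    have hTh : T ≤ h i := htail i hi1 hi2
    rw [le_div_iff₀ hp0]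
    have h1 : 0 ≤ 1 - π i := by linarith
    have h2 : T^2 * π i ≤ (h i)^2 := by nlinarith
    nlinarith [mul_nonneg h1 (sub_nonneg.mpr h2), sq_nonneg (h i - h i * π i)]
  -- combine
  set P1 : ℝ := ∑ i ∈ Finset.Icc 1 m, π i with hP1
  set P2 : ℝ := ∑ i ∈ Finset.Icc (m+1) n, π i with hP2
  have hPsum : P1 + P2 = (r:ℝ) := by rw [hP1, hP2, ← hsplitf]; exact hsum
  set Q : ℝ := ∑ i ∈ Finset.Icc (m+1) n, (h i)^2 with hQ
  have hcard : ((Finset.Icc (m+1) n).card : ℝ) = (k:ℝ) := by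
    rw [Nat.card_Icc]; norm_cast; omega
  have hb1 : ∑ i ∈ Finset.Icc 1 m, (2 * T * h i - T^2 * π i)
      ≤ ∑ i ∈ Finset.Icc 1 m, (h i)^2 / π i := Finset.sum_le_sum hhead
  have hb2 : ∑ i ∈ Finset.Icc (m+1) n, ((h i)^2 + T^2 - T^2 * π i)
      ≤ ∑ i ∈ Finset.Icc (m+1) n, (h i)^2 / π i := Finset.sum_le_sum htailb
  have he1 : ∑ i ∈ Finset.Icc 1 m, (2 * T * h i - T^2 * π i)
      = 2 * T * S - T^2 * P1 := by
    rw [Finset.sum_sub_distrib, ← Finset.mul_sum, ← Finset.mul_sum, ← hS, ← hP1]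
  have he2 : ∑ i ∈ Finset.Icc (m+1) n, ((h i)^2 + T^2 - T^2 * π i)
      = Q + (k:ℝ) * T^2 - T^2 * P2 := by
    rw [Finset.sum_sub_distrib, Finset.sum_add_distrib, ← Finset.mul_sum,
      Finset.sum_const, nsmul_eq_mul, hcard, ← hQ, ← hP2]
  rw [hsplitf (fun i => (h i)^2 / π i)]
  have hkey : S^2 / ((r:ℝ) - k) = 2 * T * S - ((r:ℝ) - k) * T^2 := by
    rw [← hTS, pow_two, mul_div_assoc, mul_div_cancel_right₀ _ hrk.ne']
    ring
  have hgoal : Q + S^2 / ((r:ℝ) - k)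
      ≤ (2 * T * S - T^2 * P1) + (Q + (k:ℝ) * T^2 - T^2 * P2) := by
    rw [hkey]; nlinarith [hPsum]
  calc Q + S^2 / ((r:ℝ) - k)
      ≤ (2 * T * S - T^2 * P1) + (Q + (k:ℝ) * T^2 - T^2 * P2) := hgoal
    _ ≤ _ := by rw [← he1, ← he2]; exact add_le_add hb1 hb2
end
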